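/- Let k₁ ≤ n₁ and k₂ ≤ n₂ be natural numbers, let M₁ be a real k₁×n₁ matrix and M₂ a real k₂×n₂ matrix, and let M be the block-diagonal (k₁+k₂)×(n₁+n₂) real matrix with diagonal blocks M₁ and M₂ (and zero off-diagonal blocks). Then: (a) for every subset γ of the column indices {0,…,n₁+n₂−1} with |γ| = k₁+k₂, if the number of elements of γ that are smaller than n₁ is not equal to k₁, then det M_γ = 0, where M_γ is the square submatrix of M formed by the columns indexed by γ in increasing order; (b) Σ_γ |det M_γ| ≤ √(C(n₁,k₁)·C(n₂,k₂)) · √(det(M Mᵀ)), where the sum runs over all subsets γ with |γ| = k₁+k₂. -/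

import Mathlib

open Finset Matrix Equiv Function


variable {R : Type*} [CommRing R]

theorem my_det_mul_aux {m n : Type*} [DecidableEq m] [Fintype m] [Fintype n]
    (M : Matrix m n R) (N : Matrix n m R) {p : m → n} (H : ¬Injective p) :
    (∑ σ : Perm m, ((Perm.sign σ : ℤ) : R) * ∏ x, M (σ x) (p x) * N (p x) x) = 0 := by
  obtain ⟨i, j, hpij, hij⟩ : ∃ i j, p i = p j ∧ i ≠ j := by
    rw [Injective] at H
    push_neg at H
    obtain ⟨i, j, h1, h2⟩ := H
    exact ⟨i, j, h1, h2⟩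
  exact
    sum_involution (fun σ _ => σ * Equiv.swap i j)
      (fun σ _ => by
        have : (∏ x, M (σ x) (p x)) = ∏ x, M ((σ * Equiv.swap i j) x) (p x) :=
          Fintype.prod_equiv (swap i j) _ _ (by simp [Equiv.apply_swap_eq_self hpij])
        simp [this, Perm.sign_swap hij, -Perm.sign_swap', prod_mul_distrib])
      (fun σ _ _ => (not_congr mul_swap_eq_iff).mpr hij) (fun _ _ => mem_univ _) fun σ _ =>
      mul_swap_involutive i j σ

theorem my_sq_key {m : Type*} [DecidableEq m] [Fintype m] (M N : Matrix m m R) :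
    ∑ τ : Perm m, ∑ σ : Perm m, ((Perm.sign σ : ℤ) : R) * ∏ i, M (σ i) (τ i) * N (τ i) i
      = det M * det N :=
  calc
    ∑ τ : Perm m, ∑ σ : Perm m, ((Perm.sign σ : ℤ) : R) * ∏ i, M (σ i) (τ i) * N (τ i) i
      = ∑ σ : Perm m, ∑ τ : Perm m,
        (∏ i, N (σ i) i) * ((Perm.sign τ : ℤ) : R) * ∏ j, M (τ j) (σ j) := by
      simp only [mul_comm, mul_left_comm, prod_mul_distrib, mul_assoc]
    _ = ∑ σ : Perm m, ∑ τ : Perm m,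
        (∏ i, N (σ i) i) * (((Perm.sign σ : ℤ) : R) * ((Perm.sign τ : ℤ) : R)) *
          ∏ i, M (τ i) i :=
      (sum_congr rfl fun σ _ =>
        Fintype.sum_equiv (Equiv.mulRight σ⁻¹) _ _ fun τ => by
          have : (∏ j, M (τ j) (σ j)) = ∏ j, M ((τ * σ⁻¹) j) j := by
            rw [← (σ⁻¹ : _ ≃ _).prod_comp]
            simp only [Equiv.Perm.coe_mul, Perm.coe_inv, Equiv.apply_symm_apply, Function.comp_apply]
          have h : ((Perm.sign σ : ℤ) : R) * ((Perm.sign (τ * σ⁻¹) : ℤ) : R) =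
              ((Perm.sign τ : ℤ) : R) :=
            calc
              ((Perm.sign σ : ℤ) : R) * ((Perm.sign (τ * σ⁻¹) : ℤ) : R) =
                  ((Perm.sign (τ * σ⁻¹ * σ) : ℤ) : R) := by
                rw [mul_comm, Perm.sign_mul (τ * σ⁻¹)]
                simp only [Int.cast_mul, Units.val_mul]
              _ = ((Perm.sign τ : ℤ) : R) := by simp only [inv_mul_cancel_right]
          simp_rw [Equiv.coe_mulRight, h]
          simp only [this])
    _ = det M * det N := by
      simp only [det_apply', Finset.mul_sum, mul_comm, mul_left_comm, mul_assoc]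

theorem my_cauchy_binet {R : Type*} [CommRing R] (k n : ℕ)
    (A : Matrix (Fin k) (Fin n) R) (B : Matrix (Fin n) (Fin k) R) :
    det (A * B) = ∑ γ ∈ (Finset.powersetCard k (Finset.univ : Finset (Fin n))).attach,
      det (A.submatrix id (γ.1.orderEmbOfFin (Finset.mem_powersetCard.mp γ.2).2)) *
        det (B.submatrix (γ.1.orderEmbOfFin (Finset.mem_powersetCard.mp γ.2).2) id) := by
  classical
  calc
    det (A * B) = ∑ p : Fin k → Fin n, ∑ σ : Perm (Fin k),
        ((Perm.sign σ : ℤ) : R) * ∏ i, A (σ i) (p i) * B (p i) i := by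
      simp only [det_apply', mul_apply, prod_univ_sum, mul_sum, Fintype.piFinset_univ]
      rw [Finset.sum_comm]
    _ = ∑ p ∈ (univ : Finset (Fin k → Fin n)).filter Injective, ∑ σ : Perm (Fin k),
        ((Perm.sign σ : ℤ) : R) * ∏ i, A (σ i) (p i) * B (p i) i := by
      refine (sum_subset (filter_subset _ _) fun f _ hinj ↦ my_det_mul_aux A B ?_).symm
      simpa only [true_and, mem_filter, mem_univ] using hinj
    _ = ∑ x ∈ (Finset.powersetCard k (Finset.univ : Finset (Fin n))).attach ×ˢ
          (univ : Finset (Perm (Fin k))), ∑ σ : Perm (Fin k),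
        ((Perm.sign σ : ℤ) : R) * ∏ i,
          A (σ i) (x.1.1.orderEmbOfFin (Finset.mem_powersetCard.mp x.1.2).2 (x.2 i)) *
            B (x.1.1.orderEmbOfFin (Finset.mem_powersetCard.mp x.1.2).2 (x.2 i)) i := by
      refine (Finset.sum_bij (fun x _ =>
          (x.1.1.orderEmbOfFin (Finset.mem_powersetCard.mp x.1.2).2) ∘ x.2) ?_ ?_ ?_ ?_).symm
      · intro x _
        simp only [mem_filter, mem_univ, true_and]
        exact (x.1.1.orderEmbOfFin _).injective.comp x.2.injective
      · rintro ⟨γ, τ⟩ _ ⟨δ, ρ⟩ _ h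
        dsimp only at h
        have hrange : Set.range ((γ.1.orderEmbOfFin (Finset.mem_powersetCard.mp γ.2).2) ∘ τ)
            = Set.range ((δ.1.orderEmbOfFin (Finset.mem_powersetCard.mp δ.2).2) ∘ ρ) := by
          rw [h]
        rw [Set.range_comp, Set.range_comp, τ.surjective.range_eq, ρ.surjective.range_eq,
          Set.image_univ, Set.image_univ, Finset.range_orderEmbOfFin,
          Finset.range_orderEmbOfFin] at hrange
        have hγδ : γ = δ := Subtype.ext (Finset.coe_inj.mp hrange)
        subst hγδ
        have : τ = ρ := by
          apply Equiv.coe_fn_injective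
          funext i
          exact (γ.1.orderEmbOfFin (Finset.mem_powersetCard.mp γ.2).2).injective (congrFun h i)
        simp [this]
      · intro p hp
        have hpinj : Injective p := by simpa using hp
        have hcard : (Finset.univ.image p).card = k := by
          rw [Finset.card_image_of_injective _ hpinj, card_univ, Fintype.card_fin]
        have hmem : Finset.univ.image p ∈
            Finset.powersetCard k (Finset.univ : Finset (Fin n)) :=
          Finset.mem_powersetCard.mpr ⟨Finset.subset_univ _, hcard⟩
        set γ : Finset (Fin n) := Finset.univ.image p with hγdef
        have hpm : ∀ i, p i ∈ γ := fun i => Finset.mem_image_of_mem p (mem_univ i)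
        have hccard : γ.card = k := hcard
        set f : Fin k → Fin k := fun i => (γ.orderIsoOfFin hccard).symm ⟨p i, hpm i⟩ with hfdef
        have hfinj : Injective f := fun a b hab => by
          have := (γ.orderIsoOfFin hccard).symm.injective hab
          exact hpinj (Subtype.ext_iff.mp this)
        have hfbij : Bijective f := Finite.injective_iff_bijective.mp hfinj
        refine ⟨⟨⟨γ, hmem⟩, Equiv.ofBijective f hfbij⟩, mem_product.mpr ⟨mem_attach _ _, mem_univ _⟩, ?_⟩
        funext i
        show γ.orderEmbOfFin _ (f i) = p i
        have := γ.coe_orderIsoOfFin_apply hccard (f i)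
        rw [← this, hfdef]
        simp
      · intro x _
        rfl
    _ = ∑ γ ∈ (Finset.powersetCard k (Finset.univ : Finset (Fin n))).attach,
        ∑ τ : Perm (Fin k), ∑ σ : Perm (Fin k),
        ((Perm.sign σ : ℤ) : R) * ∏ i,
          A (σ i) (γ.1.orderEmbOfFin (Finset.mem_powersetCard.mp γ.2).2 (τ i)) *
            B (γ.1.orderEmbOfFin (Finset.mem_powersetCard.mp γ.2).2 (τ i)) i :=
      by rw [Finset.sum_product]
    _ = ∑ γ ∈ (Finset.powersetCard k (Finset.univ : Finset (Fin n))).attach,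
      det (A.submatrix id (γ.1.orderEmbOfFin (Finset.mem_powersetCard.mp γ.2).2)) *
        det (B.submatrix (γ.1.orderEmbOfFin (Finset.mem_powersetCard.mp γ.2).2) id) := by
      refine Finset.sum_congr rfl fun γ _ => ?_
      exact my_sq_key (A.submatrix id (γ.1.orderEmbOfFin (Finset.mem_powersetCard.mp γ.2).2))
        (B.submatrix (γ.1.orderEmbOfFin (Finset.mem_powersetCard.mp γ.2).2) id)

theorem my_card_filter_lt (a b : ℕ) :
    ((Finset.univ : Finset (Fin (a + b))).filter fun i : Fin (a + b) => (i : ℕ) < a).card = a := by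
  have h : ((Finset.univ : Finset (Fin (a + b))).filter fun i : Fin (a + b) => (i : ℕ) < a)
      = (Finset.univ : Finset (Fin a)).image (Fin.castAdd b) := by
    ext x
    simp only [mem_filter, mem_univ, true_and, mem_image]
    constructor
    · intro hx; exact ⟨⟨(x : ℕ), hx⟩, Fin.ext rfl⟩
    · rintro ⟨y, rfl⟩; exact y.2
  rw [h, Finset.card_image_of_injective _ (Fin.castAdd_injective a b), card_univ,
    Fintype.card_fin]

/-- Block-diagonal Cauchy–Binet estimate: for the block-diagonal
`(k₁+k₂) × (n₁+n₂)` matrix `M` with diagonal blocks `M₁`, `M₂`: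
(a) the determinant of the submatrix of columns `γ` vanishes unless exactly `k₁`
elements of `γ` are smaller than `n₁`;
(b) the sum of `|det M_γ|` over all `(k₁+k₂)`-element column subsets `γ` is at most
`√(C(n₁,k₁) * C(n₂,k₂)) * √(det (M * Mᵀ))`. -/
theorem blockDiagonal_det_submatrix (k₁ n₁ k₂ n₂ : ℕ) (h₁ : k₁ ≤ n₁) (h₂ : k₂ ≤ n₂)
    (M₁ : Matrix (Fin k₁) (Fin n₁) ℝ) (M₂ : Matrix (Fin k₂) (Fin n₂) ℝ)
    (M : Matrix (Fin (k₁ + k₂)) (Fin (n₁ + n₂)) ℝ)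
    (hM : M = Matrix.reindex finSumFinEquiv finSumFinEquiv (Matrix.fromBlocks M₁ 0 0 M₂)) :
    (∀ (γ : Finset (Fin (n₁ + n₂))) (hγ : γ.card = k₁ + k₂),
        (γ.filter fun i : Fin (n₁ + n₂) => (i : ℕ) < n₁).card ≠ k₁ →
          (M.submatrix id (γ.orderEmbOfFin hγ)).det = 0) ∧
      ∑ γ ∈ (Finset.powersetCard (k₁ + k₂) (Finset.univ : Finset (Fin (n₁ + n₂)))).attach,
          |(M.submatrix id (γ.1.orderEmbOfFin (Finset.mem_powersetCard.mp γ.2).2)).det| ≤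
        Real.sqrt (n₁.choose k₁ * n₂.choose k₂) * Real.sqrt (M * Mᵀ).det := by
  classical
  -- entries vanish off the blocks
  have hzero : ∀ (r : Fin (k₁ + k₂)) (c : Fin (n₁ + n₂)),
      ¬(((r : ℕ) < k₁) ↔ ((c : ℕ) < n₁)) → M r c = 0 := by
    intro r c h
    subst hM
    simp only [reindex_apply, submatrix_apply]
    rcases lt_or_ge (r : ℕ) k₁ with hr | hr
    · have hc : ¬(c : ℕ) < n₁ := fun hc => h ⟨fun _ => hc, fun _ => hr⟩
      have hrr : r = Fin.castAdd k₂ ⟨(r : ℕ), hr⟩ := Fin.ext rfl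
      have hcc : c = Fin.natAdd n₁ ⟨(c : ℕ) - n₁, by omega⟩ := Fin.ext (by simp; omega)
      rw [hrr, hcc, finSumFinEquiv_symm_apply_castAdd, finSumFinEquiv_symm_apply_natAdd]
      simp
    · have hc : (c : ℕ) < n₁ := by
        by_contra hc
        exact h ⟨fun h' => absurd h' (not_lt.mpr hr), fun h' => absurd h' hc⟩
      have hrr : r = Fin.natAdd k₁ ⟨(r : ℕ) - k₁, by omega⟩ := Fin.ext (by simp; omega)
      have hcc : c = Fin.castAdd n₂ ⟨(c : ℕ), hc⟩ := Fin.ext rfl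
      rw [hrr, hcc, finSumFinEquiv_symm_apply_natAdd, finSumFinEquiv_symm_apply_castAdd]
      simp
  -- part (a)
  have parta : ∀ (γ : Finset (Fin (n₁ + n₂))) (hγ : γ.card = k₁ + k₂),
      (γ.filter fun i : Fin (n₁ + n₂) => (i : ℕ) < n₁).card ≠ k₁ →
        (M.submatrix id (γ.orderEmbOfFin hγ)).det = 0 := by
    intro γ hγ hne
    set e := γ.orderEmbOfFin hγ with he
    rw [det_apply']
    refine Finset.sum_eq_zero fun σ _ => ?_
    have hp : ∏ i, M.submatrix id (⇑e) (σ i) i = 0 := by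
      by_contra hp0
      have hp : ∀ i ∈ Finset.univ, M.submatrix id (⇑e) (σ i) i ≠ 0 :=
        Finset.prod_ne_zero_iff.mp hp0
      have hiff : ∀ i, ((σ i : ℕ) < k₁) ↔ ((e i : ℕ) < n₁) := by
        intro i
        by_contra hi
        exact hp i (mem_univ i) (hzero _ _ hi)
      apply hne
      have h1 : γ.filter (fun i : Fin (n₁ + n₂) => (i : ℕ) < n₁)
          = (Finset.univ.filter fun i => ((e i : ℕ) < n₁)).image e := by
        ext x
        simp only [mem_filter, mem_image, mem_univ, true_and]
        constructor
        · rintro ⟨hx, hlt⟩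
          have : x ∈ Set.range e := by
            rw [he, Finset.range_orderEmbOfFin]; exact hx
          obtain ⟨i, rfl⟩ := this
          exact ⟨i, hlt, rfl⟩
        · rintro ⟨i, hlt, rfl⟩
          exact ⟨γ.orderEmbOfFin_mem hγ i, hlt⟩
      rw [h1, Finset.card_image_of_injective _ e.injective]
      have h2 : (Finset.univ.filter fun i => ((e i : ℕ) < n₁))
          = Finset.univ.filter (fun i => ((σ i : ℕ) < k₁)) := by
        ext i
        simp only [mem_filter, mem_univ, true_and]
        exact (hiff i).symm
      have h3 : Finset.univ.filter (fun i : Fin (k₁ + k₂) => ((σ i : ℕ) < k₁))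
          = (Finset.univ.filter fun r : Fin (k₁ + k₂) => (r : ℕ) < k₁).image σ.symm := by
        ext x
        simp only [mem_filter, mem_univ, true_and, mem_image]
        constructor
        · intro hx; exact ⟨σ x, hx, σ.symm_apply_apply x⟩
        · rintro ⟨y, hy, rfl⟩; simpa using hy
      rw [h2, h3, Finset.card_image_of_injective _ σ.symm.injective,
        my_card_filter_lt k₁ k₂]
    rw [hp, mul_zero]
  refine ⟨parta, ?_⟩
  -- part (b)
  set A := (Finset.powersetCard (k₁ + k₂) (Finset.univ : Finset (Fin (n₁ + n₂)))).attach with hA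
  set F : {γ // γ ∈ Finset.powersetCard (k₁ + k₂) (Finset.univ : Finset (Fin (n₁ + n₂)))} → ℝ :=
    fun γ => (M.submatrix id (γ.1.orderEmbOfFin (Finset.mem_powersetCard.mp γ.2).2)).det with hF
  have hCB : ∑ γ ∈ A, F γ ^ 2 = (M * Mᵀ).det := by
    rw [my_cauchy_binet (k₁ + k₂) (n₁ + n₂) M Mᵀ]
    refine Finset.sum_congr rfl fun γ _ => ?_
    have : Mᵀ.submatrix (γ.1.orderEmbOfFin (Finset.mem_powersetCard.mp γ.2).2) id
        = (M.submatrix id (γ.1.orderEmbOfFin (Finset.mem_powersetCard.mp γ.2).2))ᵀ := rfl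
    rw [this, det_transpose, sq]
  set P := A.filter (fun γ => (γ.1.filter fun i : Fin (n₁ + n₂) => (i : ℕ) < n₁).card = k₁)
    with hP
  have hsum : ∑ γ ∈ A, |F γ| = ∑ γ ∈ P, |F γ| := by
    refine (Finset.sum_filter_of_ne fun γ _ hne => ?_).symm
    by_contra hc
    exact hne (abs_eq_zero.mpr (parta γ.1 (Finset.mem_powersetCard.mp γ.2).2 hc))
  have hPcard : (P.card : ℝ) ≤ (n₁.choose k₁ * n₂.choose k₂ : ℕ) := by
    have hle : P.card ≤
        ((Finset.powersetCard k₁ (Finset.univ.filter fun i : Fin (n₁ + n₂) => (i : ℕ) < n₁)) ×ˢ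
          (Finset.powersetCard k₂
            (Finset.univ.filter fun i : Fin (n₁ + n₂) => ¬(i : ℕ) < n₁))).card := by
      refine Finset.card_le_card_of_injOn
        (fun γ => (γ.1.filter fun i => (i : ℕ) < n₁, γ.1.filter fun i => ¬(i : ℕ) < n₁))
        ?_ ?_
      · intro γ hγ
        obtain ⟨-, hk⟩ := Finset.mem_filter.mp hγ
        have hcard := (Finset.mem_powersetCard.mp γ.2).2
        have hsplit := Finset.card_filter_add_card_filter_not
          (s := γ.1) (p := fun i : Fin (n₁ + n₂) => (i : ℕ) < n₁)
        rw [Finset.mem_coe, Finset.mem_product]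
        dsimp only
        constructor
        · exact Finset.mem_powersetCard.mpr
            ⟨Finset.filter_subset_filter _ (Finset.subset_univ _), hk⟩
        · refine Finset.mem_powersetCard.mpr
            ⟨Finset.filter_subset_filter _ (Finset.subset_univ _), ?_⟩
          omega
      · intro γ _ δ _ h
        have h1 := congrArg Prod.fst h
        have h2 := congrArg Prod.snd h
        simp only at h1 h2
        apply Subtype.ext
        rw [← Finset.filter_union_filter_not_eq (fun i : Fin (n₁ + n₂) => (i : ℕ) < n₁) γ.1,
          ← Finset.filter_union_filter_not_eq (fun i : Fin (n₁ + n₂) => (i : ℕ) < n₁) δ.1,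
          h1, h2]
    have hcount₁ : (Finset.univ.filter fun i : Fin (n₁ + n₂) => (i : ℕ) < n₁).card = n₁ :=
      my_card_filter_lt n₁ n₂
    have hcount₂ : (Finset.univ.filter fun i : Fin (n₁ + n₂) => ¬(i : ℕ) < n₁).card = n₂ := by
      have := Finset.card_filter_add_card_filter_not
        (s := (Finset.univ : Finset (Fin (n₁ + n₂)))) (p := fun i => (i : ℕ) < n₁)
      rw [card_univ, Fintype.card_fin] at this
      omega
    rw [Finset.card_product, Finset.card_powersetCard, Finset.card_powersetCard,
      hcount₁, hcount₂] at hle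
    exact_mod_cast hle
  have hnn : (0 : ℝ) ≤ ∑ γ ∈ P, |F γ| := Finset.sum_nonneg fun γ _ => abs_nonneg _
  have hsq : (∑ γ ∈ P, |F γ|) ^ 2 ≤
      ((n₁.choose k₁ * n₂.choose k₂ : ℕ) : ℝ) * (M * Mᵀ).det := by
    calc (∑ γ ∈ P, |F γ|) ^ 2 ≤ P.card * ∑ γ ∈ P, |F γ| ^ 2 :=
          sq_sum_le_card_mul_sum_sq
      _ = P.card * ∑ γ ∈ P, F γ ^ 2 := by simp [sq_abs]
      _ ≤ ((n₁.choose k₁ * n₂.choose k₂ : ℕ) : ℝ) * ∑ γ ∈ A, F γ ^ 2 := by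
          apply mul_le_mul hPcard
          · exact Finset.sum_le_sum_of_subset_of_nonneg (Finset.filter_subset _ _)
              (fun γ _ _ => sq_nonneg _)
          · exact Finset.sum_nonneg fun γ _ => sq_nonneg _
          · positivity
      _ = _ := by rw [hCB]
  rw [hsum]
  have hdetnn : (0 : ℝ) ≤ (M * Mᵀ).det := by
    rw [← hCB]; exact Finset.sum_nonneg fun γ _ => sq_nonneg _
  calc ∑ γ ∈ P, |F γ| = Real.sqrt ((∑ γ ∈ P, |F γ|) ^ 2) := (Real.sqrt_sq hnn).symm
    _ ≤ Real.sqrt (((n₁.choose k₁ * n₂.choose k₂ : ℕ) : ℝ) * (M * Mᵀ).det) :=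
        Real.sqrt_le_sqrt hsq
    _ = Real.sqrt (n₁.choose k₁ * n₂.choose k₂) * Real.sqrt (M * Mᵀ).det := by
        rw [Real.sqrt_mul (by positivity)]
        norm_num
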